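/- Every connected positive graph with at least one edge contains a vertex of even degree. Equivalently: if H is a connected graph with at least one edge in which all vertices have odd degree, then there exists a kernel W : [0,1]² → ℝ with t_H(W) < 0. -/

import Mathlib

open MeasureTheory
open scoped Classical
set_option linter.unusedSectionVars false

namespace AuxPos
open Finset

variable {V : Type} [Fintype V] (H : SimpleGraph V)

def Indep (S : Finset V) : Prop := ∀ u ∈ S, ∀ v ∈ S, ¬ H.Adj u v

noncomputable def Ncl (v : V) : Finset V := univ.filter (fun w => w = v ∨ H.Adj v w)

lemma mem_Ncl {v w : V} : w ∈ Ncl H v ↔ w = v ∨ H.Adj v w := by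
  simp [Ncl]

noncomputable def J (A : Finset V) (x : ℝ) : ℝ :=
  ∑ S ∈ A.powerset.filter (fun S => Indep H S), (-x) ^ S.card

lemma indep_mono {S T : Finset V} (h : S ⊆ T) (hT : Indep H T) : Indep H S :=
  fun u hu v hv => hT u (h hu) v (h hv)

lemma indep_empty : Indep H ∅ := by simp [Indep]

lemma J_empty (x : ℝ) : J H ∅ x = 1 := by
  unfold J
  rw [Finset.powerset_empty, Finset.filter_singleton, if_pos (indep_empty H)]
  simp

lemma J_zero (A : Finset V) : J H A 0 = 1 := by
  unfold J
  rw [Finset.sum_eq_single (∅ : Finset V)]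
  · simp
  · intro S hS hne
    have : S.card ≠ 0 := by simpa [Finset.card_eq_zero] using hne
    simp [zero_pow this]
  · intro h
    exact absurd (Finset.mem_filter.2 ⟨Finset.mem_powerset.2 (Finset.empty_subset A),
      indep_empty H⟩) h

lemma continuous_J (A : Finset V) : Continuous (J H A) :=
  continuous_finset_sum _ fun S _ => (continuous_id.neg).pow S.card

lemma sum_indep_mem (A : Finset V) (v : V) (hv : v ∈ A) (f : ℕ → ℝ) :
    ∑ S ∈ (A.powerset.filter (fun S => Indep H S)).filter (fun S => v ∈ S), f (S.card - 1)
      = ∑ T ∈ (A \ Ncl H v).powerset.filter (fun S => Indep H S), f T.card := by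
  refine Finset.sum_nbij' (fun S => S.erase v) (fun T => insert v T) ?_ ?_ ?_ ?_ ?_
  · intro S hS
    rw [Finset.mem_filter, Finset.mem_filter, Finset.mem_powerset] at hS
    obtain ⟨⟨hSA, hSi⟩, hvS⟩ := hS
    rw [Finset.mem_filter, Finset.mem_powerset]
    refine ⟨?_, indep_mono H (Finset.erase_subset _ _) hSi⟩
    intro u hu
    rw [Finset.mem_erase] at hu
    rw [Finset.mem_sdiff]
    refine ⟨hSA hu.2, ?_⟩
    rw [mem_Ncl]
    rintro (rfl | hadj)
    · exact hu.1 rfl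
    · exact hSi v hvS u hu.2 hadj
  · intro T hT
    rw [Finset.mem_filter, Finset.mem_powerset] at hT
    obtain ⟨hTA, hTi⟩ := hT
    have hvT : v ∉ T := by
      intro hvT
      have := hTA hvT
      rw [Finset.mem_sdiff, mem_Ncl] at this
      exact this.2 (Or.inl rfl)
    rw [Finset.mem_filter, Finset.mem_filter, Finset.mem_powerset]
    refine ⟨⟨?_, ?_⟩, Finset.mem_insert_self _ _⟩
    · intro u hu
      rcases Finset.mem_insert.1 hu with rfl | hu
      · exact hv
      · exact (Finset.mem_sdiff.1 (hTA hu)).1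
    · intro a ha b hb
      rcases Finset.mem_insert.1 ha with h1 | ha
      · rcases Finset.mem_insert.1 hb with h2 | hb
        · rw [h1, h2]; exact H.loopless.irrefl v
        · intro hadj
          have := hTA hb
          rw [Finset.mem_sdiff, mem_Ncl] at this
          exact this.2 (Or.inr (h1 ▸ hadj))
      · rcases Finset.mem_insert.1 hb with h2 | hb
        · intro hadj
          have := hTA ha
          rw [Finset.mem_sdiff, mem_Ncl] at this
          exact this.2 (Or.inr (h2 ▸ hadj).symm)
        · exact hTi a ha b hb
  · intro S hS
    rw [Finset.mem_filter] at hS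
    exact Finset.insert_erase hS.2
  · intro T hT
    rw [Finset.mem_filter, Finset.mem_powerset] at hT
    apply Finset.erase_insert
    intro hvT
    have := hT.1 hvT
    rw [Finset.mem_sdiff, mem_Ncl] at this
    exact this.2 (Or.inl rfl)
  · intro S hS
    rw [Finset.card_erase_of_mem (Finset.mem_filter.1 hS).2]

lemma J_erase (A : Finset V) (v : V) (hv : v ∈ A) (x : ℝ) :
    J H A x = J H (A.erase v) x - x * J H (A \ Ncl H v) x := by
  unfold J
  rw [← Finset.sum_filter_add_sum_filter_not (A.powerset.filter fun S => Indep H S)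
    (fun S => v ∈ S)]
  have h1 : ∑ S ∈ (A.powerset.filter fun S => Indep H S).filter (fun S => ¬ v ∈ S),
      (-x) ^ S.card = ∑ S ∈ (A.erase v).powerset.filter (fun S => Indep H S), (-x) ^ S.card := by
    apply Finset.sum_congr _ (fun _ _ => rfl)
    ext S
    simp only [Finset.mem_filter, Finset.mem_powerset, Finset.subset_erase]
    tauto
  have h2 : ∑ S ∈ (A.powerset.filter fun S => Indep H S).filter (fun S => v ∈ S),
      (-x) ^ S.card = -(x * ∑ T ∈ (A \ Ncl H v).powerset.filter (fun S => Indep H S),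
        (-x) ^ T.card) := by
    calc ∑ S ∈ (A.powerset.filter fun S => Indep H S).filter (fun S => v ∈ S), (-x) ^ S.card
        = ∑ S ∈ (A.powerset.filter fun S => Indep H S).filter (fun S => v ∈ S),
            (fun k => (-x) ^ (k + 1)) (S.card - 1) := by
          apply Finset.sum_congr rfl
          intro S hS
          have hvS : v ∈ S := (Finset.mem_filter.1 hS).2
          have hc : S.card - 1 + 1 = S.card :=
            Nat.succ_pred_eq_of_pos (Finset.card_pos.2 ⟨v, hvS⟩)
          simp only [hc]
      _ = ∑ T ∈ (A \ Ncl H v).powerset.filter (fun S => Indep H S),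
            (fun k => (-x) ^ (k + 1)) T.card := sum_indep_mem H A v hv (fun k => (-x) ^ (k + 1))
      _ = -(x * ∑ T ∈ (A \ Ncl H v).powerset.filter (fun S => Indep H S), (-x) ^ T.card) := by
          simp only [pow_succ]
          rw [← Finset.sum_mul]
          ring
  rw [h1, h2]
  ring

lemma hasDerivAt_J (A : Finset V) (t : ℝ) :
    HasDerivAt (fun x => J H A x) (-∑ v ∈ A, J H (A \ Ncl H v) t) t := by
  have hD : HasDerivAt (fun x => J H A x)
      (∑ S ∈ A.powerset.filter (fun S => Indep H S),
        ((S.card : ℝ) * (-t) ^ (S.card - 1) * (-1))) t := by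
    apply HasDerivAt.fun_sum
    intro S _
    have h1 : HasDerivAt (fun x : ℝ => -x) (-1) t := (hasDerivAt_id t).neg
    have h2 := (hasDerivAt_pow S.card (-t)).comp t h1
    simpa [Function.comp_def] using h2
  convert hD using 1
  have key : ∑ S ∈ A.powerset.filter (fun S => Indep H S), ((S.card : ℝ) * (-t) ^ (S.card - 1))
      = ∑ v ∈ A, J H (A \ Ncl H v) t := by
    have step1 : ∀ S : Finset V, (S.card : ℝ) * (-t) ^ (S.card - 1)
        = ∑ v ∈ univ, (if v ∈ S then (-t) ^ (S.card - 1) else 0) := by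
      intro S
      rw [← Finset.sum_filter]
      have : univ.filter (fun v => v ∈ S) = S := by
        ext w; simp
      rw [this, Finset.sum_const, nsmul_eq_mul]
    calc ∑ S ∈ A.powerset.filter (fun S => Indep H S), ((S.card : ℝ) * (-t) ^ (S.card - 1))
        = ∑ S ∈ A.powerset.filter (fun S => Indep H S), ∑ v ∈ univ,
            (if v ∈ S then (-t) ^ (S.card - 1) else 0) := Finset.sum_congr rfl fun S _ => step1 S
      _ = ∑ v ∈ univ, ∑ S ∈ A.powerset.filter (fun S => Indep H S),
            (if v ∈ S then (-t) ^ (S.card - 1) else 0) := Finset.sum_comm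
      _ = ∑ v ∈ A, J H (A \ Ncl H v) t := by
          rw [← Finset.sum_subset (Finset.subset_univ A)]
          · apply Finset.sum_congr rfl
            intro v hv
            rw [← Finset.sum_filter]
            have := sum_indep_mem H A v hv (fun k => (-t) ^ k)
            exact this.trans rfl
          · intro v _ hvA
            apply Finset.sum_eq_zero
            intro S hS
            rw [Finset.mem_filter, Finset.mem_powerset] at hS
            rw [if_neg (fun hvS => hvA (hS.1 hvS))]
  rw [← key, ← Finset.sum_mul]
  ring

lemma J_union (A B : Finset V) (hd : ∀ a ∈ A, ∀ b ∈ B, a ≠ b ∧ ¬H.Adj a b) (x : ℝ) :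
    J H (A ∪ B) x = J H A x * J H B x := by
  have hdisj : Disjoint A B := by
    rw [Finset.disjoint_left]
    intro a haA haB
    exact (hd a haA a haB).1 rfl
  unfold J
  rw [Finset.sum_mul_sum]
  rw [← Finset.sum_product' (A.powerset.filter fun S => Indep H S)
    (B.powerset.filter fun S => Indep H S) (fun S1 S2 => (-x) ^ S1.card * (-x) ^ S2.card)]
  refine Finset.sum_nbij' (fun S => (S ∩ A, S ∩ B)) (fun P => P.1 ∪ P.2) ?_ ?_ ?_ ?_ ?_
  · intro S hS
    rw [Finset.mem_filter, Finset.mem_powerset] at hS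
    rw [Finset.mem_product]
    constructor
    · rw [Finset.mem_filter, Finset.mem_powerset]
      exact ⟨Finset.inter_subset_right, indep_mono H Finset.inter_subset_left hS.2⟩
    · rw [Finset.mem_filter, Finset.mem_powerset]
      exact ⟨Finset.inter_subset_right, indep_mono H Finset.inter_subset_left hS.2⟩
  · intro P hP
    rw [Finset.mem_product] at hP
    obtain ⟨h1, h2⟩ := hP
    rw [Finset.mem_filter, Finset.mem_powerset] at h1 h2
    rw [Finset.mem_filter, Finset.mem_powerset]
    constructor
    · exact Finset.union_subset (h1.1.trans Finset.subset_union_left)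
        (h2.1.trans Finset.subset_union_right)
    · intro a ha b hb
      rcases Finset.mem_union.1 ha with ha | ha <;> rcases Finset.mem_union.1 hb with hb | hb
      · exact h1.2 a ha b hb
      · exact (hd a (h1.1 ha) b (h2.1 hb)).2
      · intro hadj
        exact (hd b (h1.1 hb) a (h2.1 ha)).2 hadj.symm
      · exact h2.2 a ha b hb
  · intro S hS
    rw [Finset.mem_filter, Finset.mem_powerset] at hS
    simp only
    rw [← Finset.inter_union_distrib_left]
    exact Finset.inter_eq_left.2 hS.1
  · intro P hP
    rw [Finset.mem_product] at hP
    obtain ⟨h1, h2⟩ := hP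
    rw [Finset.mem_filter, Finset.mem_powerset] at h1 h2
    have e1 : P.1 ∩ A = P.1 := Finset.inter_eq_left.2 h1.1
    have e2 : P.2 ∩ A = ∅ := by
      rw [← Finset.disjoint_iff_inter_eq_empty]
      exact (hdisj.symm.mono_left h2.1)
    have e3 : P.1 ∩ B = ∅ := by
      rw [← Finset.disjoint_iff_inter_eq_empty]
      exact (hdisj.mono_left h1.1)
    have e4 : P.2 ∩ B = P.2 := Finset.inter_eq_left.2 h2.1
    simp only [Finset.union_inter_distrib_right, e1, e2, e3, e4, Finset.union_empty,
      Finset.empty_union]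
  · intro S hS
    rw [Finset.mem_filter, Finset.mem_powerset] at hS
    simp only
    rw [← pow_add]
    congr 1
    rw [← Finset.card_union_of_disjoint (hdisj.mono (Finset.inter_subset_right)
      (Finset.inter_subset_right))]
    congr 1
    rw [← Finset.inter_union_distrib_left]
    exact (Finset.inter_eq_left.2 hS.1).symm


lemma exists_first_root (A : Finset V) {y : ℝ} (hy0 : 0 ≤ y) (hy : J H A y ≤ 0) :
    ∃ t, 0 < t ∧ t ≤ y ∧ J H A t = 0 ∧ ∀ z, 0 ≤ z → z < t → 0 < J H A z := by
  set Z : Set ℝ := {x | x ∈ Set.Icc 0 y ∧ J H A x = 0} with hZ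
  have hclosed : IsClosed Z :=
    (isClosed_Icc.preimage continuous_id).inter (isClosed_eq (continuous_J H A) continuous_const)
  have hne : Z.Nonempty := by
    have h0 : (0 : ℝ) ∈ Set.Icc (J H A y) (J H A 0) := by
      rw [J_zero]
      exact ⟨hy, zero_le_one⟩
    obtain ⟨c, hc, hc0⟩ := intermediate_value_Icc' hy0 (continuous_J H A).continuousOn h0
    exact ⟨c, hc, hc0⟩
  have hbdd : BddBelow Z := ⟨0, fun z hz => hz.1.1⟩
  have htZ : sInf Z ∈ Z := hclosed.csInf_mem hne hbdd
  set t := sInf Z with ht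
  have ht0 : 0 < t := by
    rcases lt_or_eq_of_le htZ.1.1 with h | h
    · exact h
    · exfalso
      have := htZ.2
      rw [← h, J_zero] at this
      norm_num at this
  refine ⟨t, ht0, htZ.1.2, htZ.2, ?_⟩
  intro z hz0 hzt
  rcases lt_trichotomy (J H A z) 0 with h | h | h
  · exfalso
    have h0 : (0 : ℝ) ∈ Set.Icc (J H A z) (J H A 0) := by
      rw [J_zero]
      exact ⟨h.le, zero_le_one⟩
    obtain ⟨c, hc, hc0⟩ := intermediate_value_Icc' hz0 (continuous_J H A).continuousOn h0
    have hcZ : c ∈ Z := ⟨⟨hc.1, hc.2.trans (hzt.le.trans htZ.1.2)⟩, hc0⟩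
    exact absurd (csInf_le hbdd hcZ) (not_le.2 (lt_of_le_of_lt hc.2 hzt))
  · exfalso
    have hzZ : z ∈ Z := ⟨⟨hz0, hzt.le.trans htZ.1.2⟩, h⟩
    exact absurd (csInf_le hbdd hzZ) (not_le.2 hzt)
  · exact h

lemma Ncl_sdiff_subset_erase (A : Finset V) (v : V) : A \ Ncl H v ⊆ A.erase v := by
  intro w hw
  rw [Finset.mem_sdiff, mem_Ncl] at hw
  rw [Finset.mem_erase]
  exact ⟨fun h => hw.2 (Or.inl h), hw.1⟩

/-- limit of nonneg values from the left -/
lemma J_nonneg_of_pos_below (A : Finset V) {s : ℝ} (hs : 0 < s)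
    (h : ∀ y, 0 ≤ y → y < s → 0 < J H A y) : 0 ≤ J H A s := by
  have htend : Filter.Tendsto (J H A) (nhdsWithin s (Set.Iio s)) (nhds (J H A s)) :=
    ((continuous_J H A).continuousAt).continuousWithinAt
  refine ge_of_tendsto htend ?_
  have hmem : Set.Ioo 0 s ∈ nhdsWithin s (Set.Iio s) := by
    rw [mem_nhdsWithin]
    exact ⟨Set.Ioi 0, isOpen_Ioi, hs, by rintro z ⟨hz1, hz2⟩; exact ⟨hz1, hz2⟩⟩
  filter_upwards [hmem] with z hz
  exact (h z hz.1.le hz.2).le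

lemma pos_subset : ∀ (n : ℕ) (A : Finset V), A.card ≤ n → ∀ B ⊆ A, ∀ t, 0 ≤ t →
    (∀ z, 0 ≤ z → z ≤ t → 0 < J H A z) → ∀ z, 0 ≤ z → z ≤ t → 0 < J H B z := by
  intro n
  induction n with
  | zero =>
    intro A hA B hBA t ht hpos
    have : A = ∅ := Finset.card_eq_zero.1 (Nat.le_zero.1 hA)
    subst this
    have : B = ∅ := Finset.subset_empty.1 hBA
    subst this
    exact hpos
  | succ n ih =>
    intro A hA B hBA t ht hpos
    by_cases hBA' : B = A
    · subst hBA'; exact hpos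
    · obtain ⟨v, hvA, hvB⟩ : ∃ v ∈ A, v ∉ B := by
        by_contra hcon
        push_neg at hcon
        exact hBA' (Finset.Subset.antisymm hBA hcon)
      have hBe : B ⊆ A.erase v := fun b hb =>
        Finset.mem_erase.2 ⟨fun h => hvB (h ▸ hb), hBA hb⟩
      have hcarde : (A.erase v).card ≤ n := by
        rw [Finset.card_erase_of_mem hvA]
        omega
      have key : ∀ z, 0 ≤ z → z ≤ t → 0 < J H (A.erase v) z := by
        by_contra hcon
        push_neg at hcon
        obtain ⟨z₀, hz₀0, hz₀t, hz₀⟩ := hcon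
        obtain ⟨s, hs0, hsz, hsroot, hbelow⟩ := exists_first_root H (A.erase v) hz₀0 hz₀
        have h1 : ∀ y, 0 ≤ y → y < s → 0 < J H (A \ Ncl H v) y := by
          intro y hy hys
          exact ih (A.erase v) hcarde (A \ Ncl H v) (Ncl_sdiff_subset_erase H A v) y hy
            (fun z hz hzy => hbelow z hz (lt_of_le_of_lt hzy hys)) y hy le_rfl
        have h2 : 0 ≤ J H (A \ Ncl H v) s := J_nonneg_of_pos_below H _ hs0 h1
        have h3 := J_erase H A v hvA s
        have h4 : 0 < J H A s := hpos s hs0.le (hsz.trans hz₀t)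
        rw [hsroot] at h3
        nlinarith
      exact ih (A.erase v) hcarde B hBe t ht key

def Stepp (A : Finset V) (a b : V) : Prop := a ∈ A ∧ b ∈ A ∧ H.Adj a b

def Rch (A : Finset V) : V → V → Prop := Relation.ReflTransGen (Stepp H A)

def ConnIn (A : Finset V) : Prop := ∀ c ∈ A, ∀ d ∈ A, Rch H A c d

lemma rch_symm {A : Finset V} {a b : V} (h : Rch H A a b) : Rch H A b a :=
  by
  haveI : Std.Symm (Stepp H A) := ⟨fun _ _ h => ⟨h.2.1, h.1, h.2.2.symm⟩⟩
  exact @Std.Symm.symm _ (Relation.ReflTransGen (Stepp H A)) _ a b h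

lemma rch_mono {A B : Finset V} (hAB : A ⊆ B) {a b : V} (h : Rch H A a b) : Rch H B a b :=
  Relation.ReflTransGen.mono (fun _ _ h => ⟨hAB h.1, hAB h.2.1, h.2.2⟩) _ _ h

lemma comp_zero : ∀ (n : ℕ) (B : Finset V), B.card ≤ n → ∀ t : ℝ, J H B t = 0 →
    ∃ C, C ⊆ B ∧ C.Nonempty ∧ ConnIn H C ∧ (∀ c ∈ C, ∀ b ∈ B, H.Adj c b → b ∈ C) ∧
      J H C t = 0 := by
  intro n
  induction n with
  | zero =>
    intro B hB t hroot
    have : B = ∅ := Finset.card_eq_zero.1 (Nat.le_zero.1 hB)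
    subst this
    rw [J_empty] at hroot
    norm_num at hroot
  | succ n ih =>
    intro B hB t hroot
    have hBne : B.Nonempty := by
      rcases Finset.eq_empty_or_nonempty B with h | h
      · subst h; rw [J_empty] at hroot; norm_num at hroot
      · exact h
    obtain ⟨u, hu⟩ := hBne
    set C₀ := B.filter (fun w => Rch H B u w) with hC₀
    have hC₀B : C₀ ⊆ B := Finset.filter_subset _ _
    have huC₀ : u ∈ C₀ := Finset.mem_filter.2 ⟨hu, Relation.ReflTransGen.refl⟩
    have key : ∀ c, Rch H B u c → Rch H C₀ u c := by
      intro c h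
      induction h with
      | refl => exact Relation.ReflTransGen.refl
      | tail h' step ih' =>
        rename_i y z
        have hyC₀ : y ∈ C₀ := Finset.mem_filter.2 ⟨step.1, h'⟩
        have hzC₀ : z ∈ C₀ := Finset.mem_filter.2 ⟨step.2.1, h'.tail step⟩
        exact ih'.tail ⟨hyC₀, hzC₀, step.2.2⟩
    have hclosed₀ : ∀ c ∈ C₀, ∀ b ∈ B, H.Adj c b → b ∈ C₀ := by
      intro c hc b hb hadj
      rw [Finset.mem_filter] at hc
      exact Finset.mem_filter.2 ⟨hb, hc.2.tail ⟨hc.1, hb, hadj⟩⟩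
    have hconn₀ : ConnIn H C₀ := by
      intro c hc d hd
      rw [Finset.mem_filter] at hc hd
      exact (rch_symm H (key c hc.2)).trans (key d hd.2)
    by_cases hCeq : C₀ = B
    · exact ⟨B, Finset.Subset.refl B, ⟨u, hu⟩, hCeq ▸ hconn₀, fun c hc b hb hadj =>
        hCeq ▸ hclosed₀ c (hCeq ▸ hc) b hb hadj, hroot⟩
    · have hd : ∀ a ∈ C₀, ∀ b ∈ B \ C₀, a ≠ b ∧ ¬H.Adj a b := by
        intro a ha b hb
        rw [Finset.mem_sdiff] at hb
        constructor
        · rintro rfl; exact hb.2 ha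
        · intro hadj
          exact hb.2 (hclosed₀ a ha b hb.1 hadj)
      have hBsplit : C₀ ∪ (B \ C₀) = B := Finset.union_sdiff_of_subset hC₀B
      have hfact : J H B t = J H C₀ t * J H (B \ C₀) t := by
        have := J_union H C₀ (B \ C₀) hd t
        rwa [hBsplit] at this
      rw [hfact] at hroot
      rcases mul_eq_zero.1 hroot with h | h
      · exact ⟨C₀, hC₀B, ⟨u, huC₀⟩, hconn₀, hclosed₀, h⟩
      · have hcard : (B \ C₀).card ≤ n := by
          have h1 : (B \ C₀).card = B.card - C₀.card := Finset.card_sdiff_of_subset hC₀B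
          have h2 : 1 ≤ C₀.card := Finset.card_pos.2 ⟨u, huC₀⟩
          omega
        obtain ⟨C, hCsub, hCne, hCconn, hCcl, hCzero⟩ := ih (B \ C₀) hcard t h
        refine ⟨C, hCsub.trans (Finset.sdiff_subset), hCne, hCconn, ?_, hCzero⟩
        intro c hc b hb hadj
        by_cases hbC₀ : b ∈ C₀
        · exfalso
          have hcB : c ∈ B := (hCsub.trans Finset.sdiff_subset) hc
          have : c ∈ C₀ := hclosed₀ b hbC₀ c hcB hadj.symm
          exact (Finset.mem_sdiff.1 (hCsub hc)).2 this
        · exact hCcl c hc b (Finset.mem_sdiff.2 ⟨hb, hbC₀⟩) hadj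

lemma exists_adj_of_closed (A : Finset V) (v : V) (hv : v ∈ A) (hconn : ConnIn H A)
    (C : Finset V) (hCA : C ⊆ A.erase v) (hCne : C.Nonempty)
    (hclosed : ∀ c ∈ C, ∀ b ∈ A.erase v, H.Adj c b → b ∈ C) :
    ∃ u ∈ C, H.Adj v u := by
  obtain ⟨c, hc⟩ := hCne
  have hcA : c ∈ A := (Finset.erase_subset v A) (hCA hc)
  have hreach : Rch H A c v := hconn c hcA v hv
  have claim : ∀ z, Rch H A c z → z ∈ C ∨ ∃ u ∈ C, H.Adj v u := by
    intro z h
    induction h with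
    | refl => exact Or.inl hc
    | tail h' step ih' =>
      rename_i y z'
      rcases ih' with hyC | hdone
      · by_cases hz'v : z' = v
        · exact Or.inr ⟨y, hyC, hz'v ▸ step.2.2.symm⟩
        · exact Or.inl (hclosed y hyC z' (Finset.mem_erase.2 ⟨hz'v, step.2.1⟩) step.2.2)
      · exact Or.inr hdone
  rcases claim v hreach with hvC | hdone
  · exact absurd (Finset.mem_erase.1 (hCA hvC)).1 (not_not.2 rfl)
  · exact hdone

lemma J_singleton (u : V) (x : ℝ) : J H {u} x = 1 - x := by
  have h := J_erase H {u} u (Finset.mem_singleton_self u) x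
  have e1 : ({u} : Finset V).erase u = ∅ := Finset.erase_singleton u
  have e2 : ({u} : Finset V) \ Ncl H u = ∅ := by
    rw [Finset.eq_empty_iff_forall_notMem]
    intro w hw
    rw [Finset.mem_sdiff, Finset.mem_singleton] at hw
    exact hw.2 (mem_Ncl H |>.2 (Or.inl hw.1))
  rw [e1, e2, J_empty] at h
  rw [h]; ring

lemma J_pair {v u : V} (hadj : H.Adj v u) (x : ℝ) : J H {v, u} x = 1 - 2 * x := by
  have h := J_erase H {v, u} v (Finset.mem_insert_self v {u}) x
  have e1 : ({v, u} : Finset V).erase v = {u} := by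
    rw [Finset.erase_insert]
    rw [Finset.mem_singleton]
    exact hadj.ne
  have e2 : ({v, u} : Finset V) \ Ncl H v = ∅ := by
    rw [Finset.eq_empty_iff_forall_notMem]
    intro w hw
    rw [Finset.mem_sdiff, Finset.mem_insert, Finset.mem_singleton] at hw
    rcases hw.1 with rfl | rfl
    · exact hw.2 (mem_Ncl H |>.2 (Or.inl rfl))
    · exact hw.2 (mem_Ncl H |>.2 (Or.inr hadj))
  rw [e1, e2, J_empty, J_singleton] at h
  rw [h]; ring

lemma first_root_erase_pos : ∀ (n : ℕ) (A : Finset V), A.card ≤ n → ConnIn H A → ∀ v ∈ A,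
    ∀ t : ℝ, 0 < t → J H A t = 0 → (∀ z, 0 ≤ z → z < t → 0 < J H A z) →
    0 < J H (A.erase v) t := by
  intro n
  induction n with
  | zero =>
    intro A hA _ v hv t _ _ _
    exfalso
    have := Finset.card_pos.2 ⟨v, hv⟩
    omega
  | succ n ih =>
    intro A hcard hconn v hv t ht hroot hbelow
    by_contra hle
    push_neg at hle
    have hposub : ∀ B, B ⊆ A → ∀ z, 0 ≤ z → z < t → 0 < J H B z := by
      intro B hB z hz hzt
      exact pos_subset H A.card A le_rfl B hB z hz
        (fun w hw hwz => hbelow w hw (lt_of_le_of_lt hwz hzt)) z hz le_rfl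
    have hposeb : ∀ z, 0 ≤ z → z < t → 0 < J H (A.erase v) z :=
      hposub _ (Finset.erase_subset v A)
    have hze : J H (A.erase v) t = 0 :=
      le_antisymm hle (J_nonneg_of_pos_below H _ ht hposeb)
    by_cases hAe : A.erase v = ∅
    · rw [hAe, J_empty] at hze; norm_num at hze
    have hNcl : J H (A \ Ncl H v) t = 0 := by
      have h3 := J_erase H A v hv t
      rw [hroot, hze] at h3
      have h4 : t * J H (A \ Ncl H v) t = 0 := by linarith
      exact (mul_eq_zero.1 h4).resolve_left ht.ne'
    obtain ⟨C, hCsub, hCne, hCconn, hCcl, hCzero⟩ :=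
      comp_zero H (A.erase v).card (A.erase v) le_rfl t hze
    obtain ⟨u, huC, hadj⟩ := exists_adj_of_closed H A v hv hconn C hCsub hCne hCcl
    have hcarde : (A.erase v).card ≤ n := by
      have h0 := Finset.card_pos.2 ⟨v, hv⟩
      rw [Finset.card_erase_of_mem hv]
      omega
    by_cases hCeq : C = A.erase v
    · by_cases hsing : A.erase v = {u}
      · rw [hsing, J_singleton] at hze
        have ht1 : t = 1 := by linarith
        have hpairsub : {v, u} ⊆ A := by
          intro w hw
          rcases Finset.mem_insert.1 hw with h | h
          · exact h ▸ hv
          · rw [Finset.mem_singleton] at h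
            refine (Finset.erase_subset v A) ?_
            rw [hsing, Finset.mem_singleton]
            exact h
        have hh := hposub {v, u} hpairsub (3/4) (by norm_num) (by rw [ht1]; norm_num)
        rw [J_pair H hadj] at hh
        norm_num at hh
      · have h3 := ih (A.erase v) hcarde (hCeq ▸ hCconn) u (hCeq ▸ huC) t ht hze hposeb
        have h4 : ∀ z, 0 ≤ z → z ≤ t → 0 < J H ((A.erase v).erase u) z := by
          intro z hz hzt
          rcases eq_or_lt_of_le hzt with h | hlt
          · exact h ▸ h3
          · exact hposub _ ((Finset.erase_subset _ _).trans (Finset.erase_subset _ _)) z hz hlt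
        have hsub2 : A \ Ncl H v ⊆ (A.erase v).erase u := by
          intro w hw
          rw [Finset.mem_sdiff, mem_Ncl] at hw
          rw [Finset.mem_erase, Finset.mem_erase]
          refine ⟨?_, ?_, hw.1⟩
          · rintro rfl
            exact hw.2 (Or.inr hadj)
          · rintro rfl
            exact hw.2 (Or.inl rfl)
        have h5 := pos_subset H ((A.erase v).erase u).card _ le_rfl (A \ Ncl H v) hsub2
          t ht.le h4 t ht.le le_rfl
        rw [hNcl] at h5
        exact lt_irrefl 0 h5
    · have hvC : v ∉ C := fun h => (Finset.mem_erase.1 (hCsub h)).1 rfl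
      have hA'sub : insert v C ⊆ A := Finset.insert_subset hv (hCsub.trans (Finset.erase_subset v A))
      have hA'conn : ConnIn H (insert v C) := by
        have hstep : Rch H (insert v C) v u := Relation.ReflTransGen.single
          ⟨Finset.mem_insert_self v C, Finset.mem_insert_of_mem huC, hadj⟩
        intro a ha b hb
        rcases Finset.mem_insert.1 ha with h1 | h1 <;> rcases Finset.mem_insert.1 hb with h2 | h2
        · rw [h1, h2]
          exact Relation.ReflTransGen.refl
        · rw [h1]
          exact hstep.trans (rch_mono H (Finset.subset_insert v C) (hCconn u huC b h2))
        · rw [h2]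
          exact rch_symm H (hstep.trans (rch_mono H (Finset.subset_insert v C) (hCconn u huC a h1)))
        · exact rch_mono H (Finset.subset_insert v C) (hCconn a h1 b h2)
      have hA'card : (insert v C).card ≤ n := by
        have hss : insert v C ⊂ A := by
          rw [Finset.ssubset_iff_of_subset hA'sub]
          obtain ⟨d, hd1, hd2⟩ : ∃ d ∈ A.erase v, d ∉ C := by
            by_contra hcon
            push_neg at hcon
            exact hCeq (Finset.Subset.antisymm hCsub hcon)
          refine ⟨d, (Finset.erase_subset v A) hd1, fun hdA' => ?_⟩
          rcases Finset.mem_insert.1 hdA' with h | h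
          · exact (Finset.mem_erase.1 hd1).1 h
          · exact hd2 h
        have := Finset.card_lt_card hss
        omega
      have hA't : J H (insert v C) t ≤ 0 := by
        by_contra hpos'
        push_neg at hpos'
        have hposA' : ∀ z, 0 ≤ z → z ≤ t → 0 < J H (insert v C) z := by
          intro z hz hzt
          rcases eq_or_lt_of_le hzt with h | hlt
          · exact h ▸ hpos'
          · exact hposub _ hA'sub z hz hlt
        have hC2 := pos_subset H (insert v C).card _ le_rfl C (Finset.subset_insert v C)
          t ht.le hposA' t ht.le le_rfl
        rw [hCzero] at hC2
        exact lt_irrefl 0 hC2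
      obtain ⟨t', ht'0, ht't, ht'root, ht'below⟩ := exists_first_root H (insert v C) ht.le hA't
      have htt' : t' = t := by
        rcases eq_or_lt_of_le ht't with h | h
        · exact h
        · exfalso
          have hcontr := hposub _ hA'sub t' ht'0.le h
          rw [ht'root] at hcontr
          exact lt_irrefl 0 hcontr
      have h6 := ih (insert v C) hA'card hA'conn v (Finset.mem_insert_self v C) t ht
        (htt' ▸ ht'root) (htt' ▸ ht'below)
      rw [Finset.erase_insert hvC, hCzero] at h6
      exact lt_irrefl 0 h6

lemma connIn_univ (hconn : H.Connected) : ConnIn H univ := by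
  intro a _ b _
  obtain ⟨w⟩ := hconn a b
  induction w with
  | nil => exact Relation.ReflTransGen.refl
  | cons h p ih =>
    exact (Relation.ReflTransGen.single ⟨Finset.mem_univ _, Finset.mem_univ _, h⟩).trans
      (ih (Finset.mem_univ _) (Finset.mem_univ _))

lemma exists_J_neg (hconn : H.Connected) (hedge : H.edgeSet.Nonempty) :
    ∃ x : ℝ, 0 < x ∧ J H univ x < 0 := by
  obtain ⟨e, he⟩ := hedge
  induction e using Sym2.ind with
  | _ u w =>
  rw [SimpleGraph.mem_edgeSet] at he
  have hadj : H.Adj u w := he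
  have hex : ∃ y : ℝ, 0 ≤ y ∧ J H univ y ≤ 0 := by
    by_contra hcon
    push_neg at hcon
    have h1 : ∀ z, 0 ≤ z → z ≤ 1 → 0 < J H (univ : Finset V) z := fun z hz _ => hcon z hz
    have h2 := pos_subset H (univ : Finset V).card univ le_rfl {u, w} (Finset.subset_univ _)
      1 zero_le_one h1 1 zero_le_one le_rfl
    rw [J_pair H hadj] at h2
    norm_num at h2
  obtain ⟨y, hy0, hyneg⟩ := hex
  obtain ⟨t, ht0, hty, htroot, htbelow⟩ := exists_first_root H univ hy0 hyneg
  have hconnIn : ConnIn H univ := connIn_univ H hconn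
  have hkey : ∀ v : V, 0 < J H ((univ : Finset V) \ Ncl H v) t := by
    intro v
    have h1 := first_root_erase_pos H (univ : Finset V).card univ le_rfl hconnIn v
      (Finset.mem_univ v) t ht0 htroot htbelow
    have h2 : ∀ z, 0 ≤ z → z ≤ t → 0 < J H ((univ : Finset V).erase v) z := by
      intro z hz hzt
      rcases eq_or_lt_of_le hzt with h | hlt
      · exact h ▸ h1
      · exact pos_subset H (univ : Finset V).card univ le_rfl _ (Finset.subset_univ _) z hz
          (fun w' hw' hwz => htbelow w' hw' (lt_of_le_of_lt hwz hlt)) z hz le_rfl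
    exact pos_subset H ((univ : Finset V).erase v).card _ le_rfl _
      (Ncl_sdiff_subset_erase H univ v) t ht0.le h2 t ht0.le le_rfl
  have hD := hasDerivAt_J H (univ : Finset V) t
  have hDneg : (-∑ v ∈ (univ : Finset V), J H ((univ : Finset V) \ Ncl H v) t) < 0 := by
    have hVne : (univ : Finset V).Nonempty := by
      have : Nonempty V := hconn.nonempty
      exact Finset.univ_nonempty
    have := Finset.sum_pos (fun v _ => hkey v) hVne
    linarith
  rw [hasDerivAt_iff_tendsto_slope] at hD
  have hev : ∀ᶠ z in nhdsWithin t {t}ᶜ, slope (J H univ) t z < 0 :=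
    hD.eventually_lt_const hDneg
  have hgt : ∀ᶠ z in nhdsWithin t (Set.Ioi t), slope (J H univ) t z < 0 :=
    hev.filter_mono (nhdsWithin_mono t (fun z hz => Set.mem_compl_singleton_iff.2 hz.ne'))
  obtain ⟨z, hzslope, hzt⟩ := (hgt.and eventually_mem_nhdsWithin).exists
  rw [Set.mem_Ioi] at hzt
  rw [slope_def_field] at hzslope
  have hden : (0:ℝ) < z - t := sub_pos.2 hzt
  have h7 := (div_lt_iff₀ hden).1 hzslope
  rw [htroot] at h7
  refine ⟨z, ht0.trans hzt, by linarith⟩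
end AuxPos

/-- The homomorphism density of a finite simple graph `H` in a symmetric kernel
`W : ℝ → ℝ → ℝ`, integrating over `[0,1]^{V(H)}`. -/
noncomputable def graphDensity {V : Type} [Fintype V] (H : SimpleGraph V)
    (W : ℝ → ℝ → ℝ) (hW : ∀ a b, W a b = W b a) : ℝ :=
  ∫ x in (Set.univ.pi fun _ : V => Set.Icc (0 : ℝ) 1),
    ∏ e ∈ (Set.toFinite H.edgeSet).toFinset,
      Sym2.lift ⟨fun a b => W (x a) (x b), fun a b => hW (x a) (x b)⟩ e

/-- `i_k(H)`: the number of independent sets of size `k` in `H`. -/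
noncomputable def indepNum {V : Type} [Fintype V] (H : SimpleGraph V) (k : ℕ) : ℕ :=
  (Finset.univ.filter fun s : Finset V =>
    s.card = k ∧ ∀ u ∈ s, ∀ v ∈ s, ¬ H.Adj u v).card

/-- The independence polynomial `I_H(x) = Σ_k i_k(H) (-x)^k`. -/
noncomputable def indepPoly {V : Type} [Fintype V] (H : SimpleGraph V) (x : ℝ) : ℝ :=
  ∑ k ∈ Finset.range (Fintype.card V + 1), (indepNum H k : ℝ) * (-x) ^ k

namespace AuxKer
open AuxPos Finset

noncomputable def Wker (p : ℝ) : ℝ → ℝ → ℝ := fun a b =>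
  if a ≤ p then (if b ≤ p then (0:ℝ) else -1) else (if b ≤ p then -1 else 1)

lemma Wker_symm (p : ℝ) : ∀ a b, Wker p a b = Wker p b a := by
  intro a b
  unfold Wker
  by_cases ha : a ≤ p <;> by_cases hb : b ≤ p <;> simp [ha, hb]

lemma Wker_measurable (p : ℝ) : Measurable (Function.uncurry (Wker p)) := by
  unfold Wker Function.uncurry
  apply Measurable.ite (measurableSet_le measurable_fst measurable_const)
  · exact Measurable.ite (measurableSet_le measurable_snd measurable_const)
      measurable_const measurable_const
  · exact Measurable.ite (measurableSet_le measurable_snd measurable_const)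
      measurable_const measurable_const

lemma Wker_bound (p : ℝ) : ∀ x y, |Wker p x y| ≤ 1 := by
  intro x y
  unfold Wker
  by_cases hx : x ≤ p <;> by_cases hy : y ≤ p <;> simp [hx, hy] <;> norm_num

section density
variable {V : Type} [Fintype V] (H : SimpleGraph V) [DecidableRel H.Adj]

noncomputable def BS (p : ℝ) (S : Finset V) (v : V) : Set ℝ :=
  if v ∈ S then Set.Icc 0 p else Set.Ioc p 1

lemma BS_subset {p : ℝ} (hp0 : 0 ≤ p) (hp1 : p ≤ 1) (S : Finset V) (v : V) :
    BS p S v ⊆ Set.Icc (0:ℝ) 1 := by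
  unfold BS
  split
  · exact Set.Icc_subset_Icc le_rfl hp1
  · intro z hz
    exact ⟨hp0.trans hz.1.le, hz.2⟩

lemma BS_measurable (p : ℝ) (S : Finset V) (v : V) : MeasurableSet (BS p S v) := by
  unfold BS
  split
  · exact measurableSet_Icc
  · exact measurableSet_Ioc

/-- the per-S coefficient -/
noncomputable def cS (S : Finset V) : ℝ := if Indep H S then ((-1:ℝ)) ^ S.card else 0

/-- the per-S product of block indicators -/
noncomputable def hprod (p : ℝ) (S : Finset V) (x : V → ℝ) : ℝ :=
  ∏ v : V, (BS p S v).indicator (fun _ => (1:ℝ)) (x v)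

lemma hprod_eq_indicator (p : ℝ) (S : Finset V) :
    hprod (V := V) p S = (Set.univ.pi (BS p S)).indicator (fun _ => (1:ℝ)) := by
  funext x
  by_cases hx : x ∈ Set.univ.pi (BS p S)
  · rw [Set.indicator_of_mem hx]
    unfold hprod
    apply Finset.prod_eq_one
    intro v _
    rw [Set.indicator_of_mem (hx v (Set.mem_univ v))]
  · rw [Set.indicator_of_notMem hx]
    rw [Set.mem_pi] at hx
    push_neg at hx
    obtain ⟨v, _, hv⟩ := hx
    unfold hprod
    exact Finset.prod_eq_zero (Finset.mem_univ v) (Set.indicator_of_notMem hv _)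

lemma hprod_integrable {p : ℝ} (S : Finset V) :
    Integrable (hprod (V := V) p S) := by
  rw [hprod_eq_indicator]
  rw [integrable_indicator_iff (MeasurableSet.pi (Set.to_countable _)
    (fun v _ => BS_measurable p S v))]
  refine integrableOn_const (ne_of_lt ?_) (by simp)
  rw [MeasureTheory.volume_pi_pi]
  refine ENNReal.prod_lt_top ?_
  intro v _
  unfold BS
  split
  · rw [Real.volume_Icc]; exact ENNReal.ofReal_lt_top
  · rw [Real.volume_Ioc]; exact ENNReal.ofReal_lt_top

lemma hprod_integral {p : ℝ} (hp0 : 0 ≤ p) (hp1 : p ≤ 1) (S : Finset V) :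
    ∫ x, hprod (V := V) p S x = p ^ S.card * (1 - p) ^ ((univ : Finset V) \ S).card := by
  rw [hprod_eq_indicator]
  rw [MeasureTheory.integral_indicator_const (1:ℝ) (MeasurableSet.pi (Set.to_countable _)
    (fun v _ => BS_measurable p S v))]
  rw [smul_eq_mul, mul_one]
  rw [MeasureTheory.measureReal_def]
  rw [MeasureTheory.volume_pi_pi]
  have : ∀ v : V, volume (BS p S v) = ENNReal.ofReal (if v ∈ S then p else 1 - p) := by
    intro v
    unfold BS
    by_cases h : v ∈ S <;> simp [h, Real.volume_Icc, Real.volume_Ioc]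
  simp only [this]
  rw [ENNReal.toReal_prod]
  have h2 : ∀ v : V, (ENNReal.ofReal (if v ∈ S then p else 1 - p)).toReal
      = (if v ∈ S then p else 1 - p) := by
    intro v
    rw [ENNReal.toReal_ofReal]
    split
    · exact hp0
    · linarith
  simp only [h2]
  rw [Finset.prod_ite (fun _ => p) (fun _ => 1 - p)]
  rw [Finset.prod_const, Finset.prod_const]
  have e1 : univ.filter (fun v => v ∈ S) = S := by ext v; simp
  have e2 : univ.filter (fun v => ¬ v ∈ S) = univ \ S := by ext v; simp
  rw [e1, e2]

lemma pointwise_eq (hind0 : ∀ v : V, Odd (H.degree v)) {p : ℝ} (hp0 : 0 ≤ p) (hp1 : p ≤ 1)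
    (x : V → ℝ) :
    (Set.univ.pi fun _ : V => Set.Icc (0 : ℝ) 1).indicator
      (fun y => ∏ e ∈ (Set.toFinite H.edgeSet).toFinset,
        Sym2.lift ⟨fun a b => Wker p (y a) (y b), fun a b => Wker_symm p (y a) (y b)⟩ e) x
    = ∑ S : Finset V, cS H S * hprod p S x := by
  by_cases hx : x ∈ Set.univ.pi (fun _ : V => Set.Icc (0:ℝ) 1)
  · rw [Set.indicator_of_mem hx]
    have hx' : ∀ v : V, x v ∈ Set.Icc (0:ℝ) 1 := fun v => hx v (Set.mem_univ v)
    have hT : ∀ v : V, v ∈ univ.filter (fun v => x v ≤ p) ↔ x v ≤ p := fun v => by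
      rw [Finset.mem_filter]; simp
    set T : Finset V := univ.filter (fun v => x v ≤ p) with hTdef
    rw [Finset.sum_eq_single T]
    · have hone : hprod p T x = 1 := by
        unfold hprod
        apply Finset.prod_eq_one
        intro v _
        unfold BS
        by_cases hv : v ∈ T
        · rw [if_pos hv, Set.indicator_of_mem (Set.mem_Icc.2 ⟨(Set.mem_Icc.1 (hx' v)).1,
            (hT v).1 hv⟩)]
        · rw [if_neg hv, Set.indicator_of_mem (Set.mem_Ioc.2
            ⟨lt_of_not_ge (fun h => hv ((hT v).2 h)), (Set.mem_Icc.1 (hx' v)).2⟩)]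
      rw [hone, mul_one]
      unfold cS
      by_cases hind : Indep H T
      · rw [if_pos hind]
        have hstep : ∀ e ∈ (Set.toFinite H.edgeSet).toFinset,
            Sym2.lift ⟨fun a b => Wker p (x a) (x b), fun a b => Wker_symm p (x a) (x b)⟩ e
              = if (∃ v ∈ T, v ∈ e) then (-1:ℝ) else 1 := by
          intro e he
          rw [Set.Finite.mem_toFinset] at he
          induction e using Sym2.ind with
          | _ a b =>
            rw [SimpleGraph.mem_edgeSet] at he
            rw [Sym2.lift_mk]
            have hcond : (∃ v ∈ T, v ∈ s(a, b)) ↔ (a ∈ T ∨ b ∈ T) := by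
              constructor
              · rintro ⟨v, hv, hve⟩
                rcases Sym2.mem_iff.1 hve with rfl | rfl
                · exact Or.inl hv
                · exact Or.inr hv
              · rintro (h | h)
                · exact ⟨a, h, Sym2.mem_iff.2 (Or.inl rfl)⟩
                · exact ⟨b, h, Sym2.mem_iff.2 (Or.inr rfl)⟩
            have hnot : ¬(a ∈ T ∧ b ∈ T) := fun h => hind a h.1 b h.2 he
            show Wker p (x a) (x b) = _
            unfold Wker
            by_cases ha : x a ≤ p <;> by_cases hb : x b ≤ p
            · exact absurd ⟨(hT a).2 ha, (hT b).2 hb⟩ hnot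
            · rw [if_pos ha, if_neg hb, if_pos (hcond.2 (Or.inl ((hT a).2 ha)))]
            · rw [if_neg ha, if_pos hb, if_pos (hcond.2 (Or.inr ((hT b).2 hb)))]
            · rw [if_neg ha, if_neg hb, if_neg]
              rw [hcond]
              rintro (h | h)
              · exact ha ((hT a).1 h)
              · exact hb ((hT b).1 h)
        rw [Finset.prod_congr rfl hstep]
        have hpow : ∀ e ∈ (Set.toFinite H.edgeSet).toFinset,
            (if (∃ v ∈ T, v ∈ e) then (-1:ℝ) else 1)
              = (-1:ℝ) ^ (if (∃ v ∈ T, v ∈ e) then 1 else 0) := by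
          intro e _; split <;> simp
        rw [Finset.prod_congr rfl hpow, Finset.prod_pow_eq_pow_sum]
        have hbi : (Set.toFinite H.edgeSet).toFinset.filter (fun e => ∃ v ∈ T, v ∈ e)
            = T.biUnion (fun v => H.incidenceFinset v) := by
          ext e
          rw [Finset.mem_filter, Finset.mem_biUnion, Set.Finite.mem_toFinset]
          constructor
          · rintro ⟨he, v, hv, hve⟩
            exact ⟨v, hv, (SimpleGraph.mem_incidenceFinset _ _ _).2 ⟨he, hve⟩⟩
          · rintro ⟨v, hv, hve⟩
            have h2 := (SimpleGraph.mem_incidenceFinset _ _ _).1 hve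
            exact ⟨h2.1, v, hv, h2.2⟩
        have hdisj : ∀ v ∈ T, ∀ w ∈ T, v ≠ w →
            Disjoint (H.incidenceFinset v) (H.incidenceFinset w) := by
          intro v hv w hw hvw
          rw [Finset.disjoint_left]
          intro e hev hew
          have h1 := (SimpleGraph.mem_incidenceFinset _ _ _).1 hev
          have h2 := (SimpleGraph.mem_incidenceFinset _ _ _).1 hew
          have h1e : e ∈ H.edgeSet := h1.1
          have h1v : v ∈ e := h1.2
          have h2w : w ∈ e := h2.2
          have he : e = s(v, w) := (Sym2.mem_and_mem_iff hvw).1 ⟨h1v, h2w⟩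
          rw [he, SimpleGraph.mem_edgeSet] at h1e
          exact hind v hv w hw h1e
        have hcount : (∑ e ∈ (Set.toFinite H.edgeSet).toFinset,
            if (∃ v ∈ T, v ∈ e) then 1 else 0) = ∑ v ∈ T, H.degree v := by
          rw [Finset.sum_boole, Nat.cast_id, hbi, Finset.card_biUnion hdisj]
          exact Finset.sum_congr rfl (fun v _ => H.card_incidenceFinset_eq_degree v)
        rw [hcount, ← Finset.prod_pow_eq_pow_sum]
        have hodd1 : ∀ v ∈ T, ((-1:ℝ)) ^ H.degree v = -1 :=
          fun v _ => Odd.neg_one_pow (hind0 v)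
        rw [Finset.prod_congr rfl hodd1, Finset.prod_const]
      · rw [if_neg hind]
        unfold Indep at hind
        push_neg at hind
        obtain ⟨a, ha, b, hb, hab⟩ := hind
        refine Finset.prod_eq_zero (i := s(a, b)) ?_ ?_
        · rw [Set.Finite.mem_toFinset, SimpleGraph.mem_edgeSet]
          exact hab
        · rw [Sym2.lift_mk]
          show Wker p (x a) (x b) = 0
          unfold Wker
          rw [if_pos ((hT a).1 ha), if_pos ((hT b).1 hb)]
    · intro S _ hST
      have hzero : hprod p S x = 0 := by
        have hvex : ∃ v, ¬(v ∈ S ↔ v ∈ T) := by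
          by_contra hcon
          push_neg at hcon
          exact hST (Finset.ext fun v => hcon v)
        obtain ⟨v, hviff⟩ := hvex
        have hv : (v ∈ S ∧ v ∉ T) ∨ (v ∉ S ∧ v ∈ T) := by tauto
        unfold hprod
        apply Finset.prod_eq_zero (Finset.mem_univ v)
        unfold BS
        rcases hv with ⟨h1, h2⟩ | ⟨h1, h2⟩
        · rw [if_pos h1]
          apply Set.indicator_of_notMem
          intro hmem
          exact h2 ((hT v).2 hmem.2)
        · rw [if_neg h1]
          apply Set.indicator_of_notMem
          intro hmem
          exact absurd ((hT v).1 h2) (not_le.2 hmem.1)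
      rw [hzero, mul_zero]
    · intro h
      exact absurd (Finset.mem_univ T) h
  · rw [Set.indicator_of_notMem hx]
    symm
    apply Finset.sum_eq_zero
    intro S _
    rw [Set.mem_pi] at hx
    push_neg at hx
    obtain ⟨v, _, hv⟩ := hx
    unfold hprod
    rw [Finset.prod_eq_zero (Finset.mem_univ v) (Set.indicator_of_notMem
      (fun hmem => hv (BS_subset hp0 hp1 S v hmem)) _), mul_zero]

lemma density_val (hodd : ∀ v : V, Odd (H.degree v)) {p : ℝ} (hp0 : 0 ≤ p) (hp1 : p ≤ 1) :
    graphDensity H (Wker p) (Wker_symm p)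
      = ∑ S : Finset V, cS H S * (p ^ S.card * (1 - p) ^ ((univ : Finset V) \ S).card) := by
  unfold graphDensity
  rw [← MeasureTheory.integral_indicator (MeasurableSet.pi (Set.to_countable _)
    (fun v _ => measurableSet_Icc))]
  have hpt := pointwise_eq H hodd hp0 hp1
  rw [integral_congr_ae (Filter.Eventually.of_forall hpt)]
  rw [MeasureTheory.integral_finset_sum _
    (fun S _ => (hprod_integrable S).const_mul (cS H S))]
  apply Finset.sum_congr rfl
  intro S _
  rw [MeasureTheory.integral_const_mul, hprod_integral hp0 hp1 S]

end density
end AuxKer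

lemma sum_eq_J {V : Type} [Fintype V] (H : SimpleGraph V) {p x₀ : ℝ} (hp1 : p < 1)
    (hpx : (1 - p) * x₀ = p) :
    ∑ S : Finset V, AuxKer.cS H S *
        (p ^ S.card * (1 - p) ^ ((Finset.univ : Finset V) \ S).card)
      = (1 - p) ^ (Fintype.card V) * AuxPos.J H Finset.univ x₀ := by
  unfold AuxPos.J
  rw [Finset.mul_sum, Finset.powerset_univ]
  have hsplit0 : ∀ S : Finset V, AuxKer.cS H S *
      (p ^ S.card * (1 - p) ^ ((Finset.univ : Finset V) \ S).card)
      = if AuxPos.Indep H S then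
          ((-1:ℝ)) ^ S.card * (p ^ S.card * (1 - p) ^ ((Finset.univ : Finset V) \ S).card)
        else 0 := by
    intro S
    unfold AuxKer.cS
    split <;> simp
  rw [Finset.sum_congr rfl (fun S _ => hsplit0 S), ← Finset.sum_filter]
  apply Finset.sum_congr rfl
  intro S _
  have hk : S.card ≤ Fintype.card V := by
    simpa using Finset.card_le_card (Finset.subset_univ S)
  have hsd : ((Finset.univ : Finset V) \ S).card = Fintype.card V - S.card := by
    rw [Finset.card_sdiff_of_subset (Finset.subset_univ S), Finset.card_univ]
  have hpk : p ^ S.card = (1 - p) ^ S.card * x₀ ^ S.card := by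
    rw [← mul_pow, hpx]
  have hsplit : ((1:ℝ) - p) ^ Fintype.card V
      = (1 - p) ^ S.card * (1 - p) ^ (Fintype.card V - S.card) := by
    rw [← pow_add, Nat.add_sub_cancel' hk]
  have hneg : (-x₀ : ℝ) ^ S.card = (-1) ^ S.card * x₀ ^ S.card := neg_pow x₀ S.card
  rw [hsd, hpk, hsplit, hneg]
  ring

/-- A connected graph with at least one edge in which all degrees are odd is not
positive: some symmetric bounded measurable kernel gives negative density. -/
theorem stmt2 {V : Type} [Fintype V] (H : SimpleGraph V) [DecidableRel H.Adj]
    (hconn : H.Connected) (hedge : H.edgeSet.Nonempty)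
    (hodd : ∀ v : V, Odd (H.degree v)) :
    ∃ (W : ℝ → ℝ → ℝ) (hsym : ∀ a b, W a b = W b a),
      Measurable (Function.uncurry W) ∧ (∃ C, ∀ x y, |W x y| ≤ C) ∧
        graphDensity H W hsym < 0 := by
  obtain ⟨x₀, hx₀, hnegJ⟩ := AuxPos.exists_J_neg H hconn hedge
  have h1x : (0:ℝ) < 1 + x₀ := by linarith
  set p : ℝ := x₀ / (1 + x₀) with hpdef
  have hp0 : 0 ≤ p := le_of_lt (div_pos hx₀ h1x)
  have hp1 : p < 1 := by
    rw [hpdef, div_lt_one h1x]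
    linarith
  have hpx : (1 - p) * x₀ = p := by
    rw [hpdef]
    field_simp
    ring
  refine ⟨AuxKer.Wker p, AuxKer.Wker_symm p, AuxKer.Wker_measurable p,
    ⟨1, AuxKer.Wker_bound p⟩, ?_⟩
  rw [AuxKer.density_val H hodd hp0 hp1.le, sum_eq_J H hp1 hpx]
  exact mul_neg_of_pos_of_neg (pow_pos (by linarith) _) hnegJ
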